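/- arXiv:2312.06784 — 2 statements merged into one kernel-verified Lean document; each statement's English description precedes it below -/
import Mathlib

section
/- Fix q > 1 and ε ∈ (0,1). There exists a constant β(q,ε) > 0 (depending only on q, ε and K; one may take β(q,ε) = 6K e^{1/2+ε/2+2q}) such that, defining for each γ > 0 the random quantity C^{(γ)}_k = sup{ Σ_{j∈𝒥} |Q^{(γ)}_{ij}(ℓ,w) − Q̃^{(γ)}_{ij}(ℓ,w)| : 0 ≤ w ≤ ℓ ≤ k−1, i ∈ 𝒥 } (with C^{(γ)}_0 = 0), one has P( C^{(γ)}_{⌊γ^{1+ε}⌋} ≥ β(q,ε) (log γ) γ^{−3/2+ε/2} ) = o(γ^{−q}) as γ → ∞. -/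
open scoped BigOperators
open MeasureTheory ProbabilityTheory Filter Asymptotics

noncomputable section

section Aux

open Real Set

lemma aux_indicator_eq {t : ℝ} :
    (fun x : ℝ => Real.exp (t * x) * (exponentialPDF 1 x).toReal)
      = Set.indicator (Ici 0) (fun x => Real.exp (-(1 - t) * x)) := by
  ext x
  rw [exponentialPDF_eq]
  by_cases hx : 0 ≤ x
  · simp only [if_pos hx, one_mul, ENNReal.toReal_ofReal (exp_pos _).le,
      Set.indicator_of_mem (mem_Ici.2 hx), ← Real.exp_add]
    ring_nf
  · rw [if_neg hx, Set.indicator_of_notMem (by simpa using hx)]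
    simp

lemma aux_indicator_integrable {t : ℝ} (ht : t < 1) :
    Integrable (Set.indicator (Ici 0) (fun x => Real.exp (-(1 - t) * x)))
      (volume : Measure ℝ) := by
  rw [integrable_indicator_iff measurableSet_Ici, integrableOn_Ici_iff_integrableOn_Ioi]
  exact exp_neg_integrableOn_Ioi 0 (by linarith)

lemma aux_exp_integrable_expMeasure {t : ℝ} (ht : t < 1) :
    Integrable (fun x => Real.exp (t * x)) (expMeasure 1) := by
  rw [show expMeasure 1 = (volume : Measure ℝ).withDensity
      (fun x => ENNReal.ofReal (exponentialPDFReal 1 x)) from rfl,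
    integrable_withDensity_iff (measurable_exponentialPDFReal 1).ennreal_ofReal
    (Filter.Eventually.of_forall fun x => ENNReal.ofReal_lt_top)]
  rw [show (fun x : ℝ => Real.exp (t * x) * (ENNReal.ofReal (exponentialPDFReal 1 x)).toReal)
    = Set.indicator (Ici 0) (fun x => Real.exp (-(1 - t) * x)) from aux_indicator_eq]
  exact aux_indicator_integrable ht

lemma aux_integral_exp_expMeasure {t : ℝ} (ht : t < 1) :
    ∫ x, Real.exp (t * x) ∂(expMeasure 1) = (1 - t)⁻¹ := by
  have h1t : (0:ℝ) < 1 - t := by linarith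
  rw [integral_eq_lintegral_of_nonneg_ae (Filter.Eventually.of_forall fun x => (exp_pos _).le)
    (Measurable.aestronglyMeasurable (by fun_prop))]
  rw [show expMeasure 1 = (volume : Measure ℝ).withDensity
      (fun x => ENNReal.ofReal (exponentialPDFReal 1 x)) from rfl,
    lintegral_withDensity_eq_lintegral_mul _ (measurable_exponentialPDFReal 1).ennreal_ofReal
      (by fun_prop)]
  have key : (fun x => ENNReal.ofReal (exponentialPDFReal 1 x) * ENNReal.ofReal (Real.exp (t * x)))
      = fun x => ENNReal.ofReal (Set.indicator (Ici 0) (fun x => Real.exp (-(1 - t) * x)) x) := by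
    ext x
    rw [← ENNReal.ofReal_mul (exponentialPDFReal_nonneg one_pos x), mul_comm,
      show Real.exp (t * x) * exponentialPDFReal 1 x
        = Real.exp (t * x) * (exponentialPDF 1 x).toReal by
          rw [show exponentialPDF 1 x = ENNReal.ofReal (exponentialPDFReal 1 x) from rfl,
            ENNReal.toReal_ofReal (exponentialPDFReal_nonneg one_pos x)],
      show ∀ y:ℝ, Real.exp (t * y) * (exponentialPDF 1 y).toReal
        = Set.indicator (Ici 0) (fun z => Real.exp (-(1 - t) * z)) y from
        fun y => congrFun aux_indicator_eq y]
  simp only [Pi.mul_apply]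
  rw [show (∫⁻ (a:ℝ), ENNReal.ofReal (exponentialPDFReal 1 a) * ENNReal.ofReal (Real.exp (t * a)))
      = ∫⁻ (a:ℝ), ENNReal.ofReal (Set.indicator (Ici 0) (fun x => Real.exp (-(1 - t) * x)) a)
      from by rw [key],
    ← ofReal_integral_eq_lintegral_ofReal (aux_indicator_integrable ht)
      (Filter.Eventually.of_forall fun x => Set.indicator_nonneg (fun y _ => (exp_pos _).le) x),
    integral_indicator measurableSet_Ici, integral_Ici_eq_integral_Ioi]
  have := integral_comp_mul_left_Ioi (fun y => Real.exp (-y)) 0 h1t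
  simp only [mul_zero, integral_exp_neg_Ioi, neg_zero, Real.exp_zero, smul_eq_mul, mul_one] at this
  rw [show (fun x : ℝ => Real.exp (-(1-t) * x)) = fun x : ℝ => Real.exp (-((1-t) * x)) by
      ext x; ring_nf]
  rw [this, ENNReal.toReal_ofReal (by positivity)]

variable {Ω : Type*} [MeasurableSpace Ω] (P : Measure Ω) [IsProbabilityMeasure P]
    (E : ℕ → Ω → ℝ) (hEmeas : ∀ i, Measurable (E i))
    (hEindep : iIndepFun E P)
    (hEexp : ∀ i, P.map (E i) = expMeasure 1)

set_option linter.unusedSectionVars false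

include hEmeas hEexp in
lemma aux_int_one {t : ℝ} (ht : t < 1) (i : ℕ) :
    Integrable (fun ω => Real.exp (t * E i ω)) P := by
  have h := (integrable_map_measure (μ := P) (f := E i) (g := fun x => Real.exp (t * x))
    (Measurable.aestronglyMeasurable (by fun_prop)) (hEmeas i).aemeasurable)
  rw [hEexp i] at h
  exact h.mp (aux_exp_integrable_expMeasure ht)

include hEmeas hEexp in
lemma aux_mgf_one {t : ℝ} (ht : t < 1) (i : ℕ) :
    mgf (E i) P t = (1 - t)⁻¹ := by
  have h := integral_map (μ := P) (φ := E i) (f := fun x => Real.exp (t * x))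
    (hEmeas i).aemeasurable (Measurable.aestronglyMeasurable (by fun_prop))
  rw [hEexp i] at h
  rw [mgf, ← h]
  exact aux_integral_exp_expMeasure ht

lemma aux_inv_le_exp {t : ℝ} (ht : t ≤ 1/2) : (1 - t)⁻¹ ≤ Real.exp (t + 2 * t^2) := by
  have h1t : (0:ℝ) < 1 - t := by linarith
  rw [show (1-t)⁻¹ = Real.exp (Real.log (1-t)⁻¹) from (Real.exp_log (by positivity)).symm]
  apply Real.exp_le_exp.mpr
  have h := Real.log_le_sub_one_of_pos (inv_pos.mpr h1t)
  have he : (1-t)⁻¹ - 1 = t / (1-t) := by field_simp; ring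
  rw [he] at h
  refine h.trans ?_
  rw [div_le_iff₀ h1t]
  nlinarith

include hEmeas hEindep hEexp in
lemma aux_chernoff_upper (ℓ : ℕ) {t u : ℝ} (ht0 : 0 ≤ t) (ht : t ≤ 1/2) :
    (P {ω | u ≤ ∑ i ∈ Finset.range ℓ, E i ω}).toReal
      ≤ Real.exp (-t*u + ℓ*(t+2*t^2)) := by
  have hlt : t < 1 := by linarith
  have hset : {ω | u ≤ ∑ i ∈ Finset.range ℓ, E i ω}
      = {ω | u ≤ (∑ i ∈ Finset.range ℓ, E i) ω} := by
    simp [Finset.sum_apply]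
  have hint : Integrable (fun ω => Real.exp (t * (∑ i ∈ Finset.range ℓ, E i) ω)) P := by
    have := hEindep.integrable_exp_mul_sum hEmeas
      (fun i _ => aux_int_one P E hEmeas hEexp hlt i) (s := Finset.range ℓ)
    simpa [Finset.sum_apply] using this
  have h := measure_ge_le_exp_mul_mgf (μ := P) (X := ∑ i ∈ Finset.range ℓ, E i) u ht0 hint
  rw [hset]
  refine h.trans ?_
  rw [hEindep.mgf_sum hEmeas (Finset.range ℓ)]
  have hm : ∏ i ∈ Finset.range ℓ, mgf (E i) P t = ((1-t)⁻¹)^ℓ := by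
    rw [Finset.prod_congr rfl (fun i _ => aux_mgf_one P E hEmeas hEexp hlt i)]
    simp
  rw [hm, Real.exp_add]
  refine mul_le_mul_of_nonneg_left ?_ (Real.exp_pos _).le
  calc ((1-t)⁻¹)^ℓ ≤ (Real.exp (t + 2*t^2))^ℓ :=
        pow_le_pow_left₀ (inv_nonneg.mpr (by linarith)) (aux_inv_le_exp ht) ℓ
    _ = Real.exp (ℓ*(t+2*t^2)) := by rw [← Real.exp_nat_mul]

include hEmeas hEindep hEexp in
lemma aux_chernoff_lower (ℓ : ℕ) {t u : ℝ} (ht0 : 0 ≤ t) (ht : t ≤ 1/2) :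
    (P {ω | ∑ i ∈ Finset.range ℓ, E i ω ≤ u}).toReal
      ≤ Real.exp (t*u + ℓ*(-t+2*t^2)) := by
  have hlt : -t < 1 := by linarith
  have hset : {ω | ∑ i ∈ Finset.range ℓ, E i ω ≤ u}
      = {ω | (∑ i ∈ Finset.range ℓ, E i) ω ≤ u} := by
    simp [Finset.sum_apply]
  have hint : Integrable (fun ω => Real.exp (-t * (∑ i ∈ Finset.range ℓ, E i) ω)) P := by
    have := hEindep.integrable_exp_mul_sum hEmeas
      (fun i _ => aux_int_one P E hEmeas hEexp hlt i) (s := Finset.range ℓ)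
    simpa [Finset.sum_apply] using this
  have h := measure_le_le_exp_mul_mgf (μ := P) (X := ∑ i ∈ Finset.range ℓ, E i) u
    (neg_nonpos.mpr ht0) hint
  rw [hset]
  refine h.trans ?_
  rw [hEindep.mgf_sum hEmeas (Finset.range ℓ)]
  have hm : ∏ i ∈ Finset.range ℓ, mgf (E i) P (-t) = ((1-(-t))⁻¹)^ℓ := by
    rw [Finset.prod_congr rfl (fun i _ => aux_mgf_one P E hEmeas hEexp hlt i)]
    simp
  rw [hm, neg_neg, Real.exp_add]
  refine mul_le_mul_of_nonneg_left ?_ (Real.exp_pos _).le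
  calc ((1-(-t))⁻¹)^ℓ ≤ (Real.exp (-t + 2*(-t)^2))^ℓ :=
        pow_le_pow_left₀ (inv_nonneg.mpr (by linarith)) (aux_inv_le_exp (by linarith)) ℓ
    _ = Real.exp (ℓ*(-t+2*t^2)) := by rw [← Real.exp_nat_mul]; ring_nf

include hEmeas hEindep hEexp in
lemma aux_chernoff_abs (ℓ : ℕ) {t M : ℝ} (ht0 : 0 ≤ t) (ht : t ≤ 1/2) :
    (P {ω | M ≤ |∑ i ∈ Finset.range ℓ, E i ω - ℓ|}).toReal
      ≤ 2 * Real.exp (-t*M + ℓ*(2*t^2)) := by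
  have hsub : {ω | M ≤ |∑ i ∈ Finset.range ℓ, E i ω - ℓ|}
      ⊆ {ω | (ℓ:ℝ) + M ≤ ∑ i ∈ Finset.range ℓ, E i ω}
        ∪ {ω | ∑ i ∈ Finset.range ℓ, E i ω ≤ (ℓ:ℝ) - M} := by
    intro ω hω
    rcases le_abs.mp (Set.mem_setOf_eq ▸ hω) with h | h
    · exact Or.inl (by simp only [Set.mem_setOf_eq]; linarith)
    · exact Or.inr (by simp only [Set.mem_setOf_eq]; linarith)
  have h1 := aux_chernoff_upper P E hEmeas hEindep hEexp ℓ (u := (ℓ:ℝ) + M) ht0 ht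
  have h2 := aux_chernoff_lower P E hEmeas hEindep hEexp ℓ (u := (ℓ:ℝ) - M) ht0 ht
  have hle : (P {ω | M ≤ |∑ i ∈ Finset.range ℓ, E i ω - ℓ|}).toReal
      ≤ (P {ω | (ℓ:ℝ) + M ≤ ∑ i ∈ Finset.range ℓ, E i ω}).toReal
        + (P {ω | ∑ i ∈ Finset.range ℓ, E i ω ≤ (ℓ:ℝ) - M}).toReal := by
    have := (measure_mono (μ := P) hsub).trans (measure_union_le _ _)
    calc (P {ω | M ≤ |∑ i ∈ Finset.range ℓ, E i ω - ℓ|}).toReal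
        ≤ ((P {ω | (ℓ:ℝ) + M ≤ ∑ i ∈ Finset.range ℓ, E i ω})
          + (P {ω | ∑ i ∈ Finset.range ℓ, E i ω ≤ (ℓ:ℝ) - M})).toReal := by
          exact ENNReal.toReal_mono
            (ENNReal.add_ne_top.mpr ⟨measure_ne_top P _, measure_ne_top P _⟩) this
      _ = _ := ENNReal.toReal_add (measure_ne_top P _) (measure_ne_top P _)
  refine hle.trans ?_
  have e1 : -t*((ℓ:ℝ)+M) + ℓ*(t+2*t^2) = -t*M + ℓ*(2*t^2) := by ring
  have e2 : t*((ℓ:ℝ)-M) + ℓ*(-t+2*t^2) = -t*M + ℓ*(2*t^2) := by ring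
  rw [e1] at h1; rw [e2] at h2
  linarith

end Aux

/-- `C_N`: `C_0 = 0` and, for `N ≥ 1`,
`C_N = sup { ∑_j |Q_{ij}(ℓ,w) − Q̃_{ij}(ℓ,w)| : 0 ≤ w ≤ ℓ ≤ N−1, i ∈ 𝒥 }`
(the supremum of the empty set in `ℝ` being `0`). -/
def Cconst {J : Type*} [Fintype J] (Q Q' : ℕ → ℕ → Matrix J J ℝ) (N : ℕ) : ℝ :=
  sSup {x : ℝ | ∃ ℓ w, ∃ i : J, w ≤ ℓ ∧ ℓ < N ∧ x = ∑ j, |Q ℓ w i j - Q' ℓ w i j|}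

section Det

open Real Set

lemma aux_det_bound {J : Type*} [Fintype J] [DecidableEq J] [Nonempty J]
    (Λ : ℝ → ℝ → Matrix J J ℝ) (K : ℝ) (hK : 0 ≤ K)
    (hLip : ∀ s₁ s₂ v₁ v₂ : ℝ, 0 ≤ s₁ → 0 ≤ s₂ → 0 ≤ v₁ → 0 ≤ v₂ →
      ∀ i : J, ∑ j, |Λ s₁ v₁ i j - Λ s₂ v₂ i j| ≤ K * (|s₁ - s₂| + |v₁ - v₂|))
    (γ M : ℝ) (hγ : 1 < γ) (hM : 0 ≤ M) (N : ℕ) (e : ℕ → ℝ)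
    (hpos : ∀ i < N, 0 ≤ e i)
    (hdev : ∀ ℓ ≤ N, |∑ i ∈ Finset.range ℓ, e i - ℓ| ≤ M) :
    Cconst
      (fun ℓ w => 1 + γ⁻¹ •
        Λ ((∑ i ∈ Finset.range (ℓ+1), e i) / γ)
          ((∑ i ∈ Finset.range (ℓ+1), e i) / γ - (∑ i ∈ Finset.range (ℓ-w), e i) / γ))
      (fun ℓ w => 1 + γ⁻¹ • Λ (((ℓ:ℝ)+1)/γ) (((w:ℝ)+1)/γ)) N
      ≤ 3 * K * M / γ^2 := by
  have hγ0 : (0:ℝ) < γ := by linarith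
  apply Real.sSup_le
  · rintro x ⟨ℓ, w, i, hwℓ, hℓN, rfl⟩
    set S : ℕ → ℝ := fun m => ∑ i ∈ Finset.range m, e i with hS
    have hmono : S (ℓ-w) ≤ S (ℓ+1) := by
      apply Finset.sum_le_sum_of_subset_of_nonneg
        (Finset.range_subset_range.mpr (by omega))
      intro j hj _
      exact hpos j (lt_of_lt_of_le (Finset.mem_range.mp hj) hℓN)
    have hd1 : |S (ℓ+1) / γ - ((ℓ:ℝ)+1)/γ| ≤ M / γ := by
      rw [div_sub_div_same, abs_div, abs_of_pos hγ0]
      apply div_le_div_of_nonneg_right ?_ hγ0.le |>.trans_eq rfl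
      have := hdev (ℓ+1) (by omega)
      push_cast at this ⊢
      exact this
    have hd2 : |S (ℓ-w) / γ - ((ℓ:ℝ)-w)/γ| ≤ M / γ := by
      rw [div_sub_div_same, abs_div, abs_of_pos hγ0]
      apply div_le_div_of_nonneg_right ?_ hγ0.le |>.trans_eq rfl
      have := hdev (ℓ-w) (by omega)
      rw [Nat.cast_sub hwℓ] at this
      exact this
    have hsum : ∀ j, ((1 + γ⁻¹ • Λ (S (ℓ+1) / γ) (S (ℓ+1) / γ - S (ℓ-w) / γ)) i j
        - (1 + γ⁻¹ • Λ (((ℓ:ℝ)+1)/γ) (((w:ℝ)+1)/γ)) i j)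
        = γ⁻¹ * (Λ (S (ℓ+1) / γ) (S (ℓ+1) / γ - S (ℓ-w) / γ) i j
          - Λ (((ℓ:ℝ)+1)/γ) (((w:ℝ)+1)/γ) i j) := by
      intro j
      simp only [Matrix.add_apply, Matrix.smul_apply, smul_eq_mul]
      ring
    calc ∑ j, |(1 + γ⁻¹ • Λ (S (ℓ+1) / γ) (S (ℓ+1) / γ - S (ℓ-w) / γ)) i j
          - (1 + γ⁻¹ • Λ (((ℓ:ℝ)+1)/γ) (((w:ℝ)+1)/γ)) i j|
        = γ⁻¹ * ∑ j, |Λ (S (ℓ+1) / γ) (S (ℓ+1) / γ - S (ℓ-w) / γ) i j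
          - Λ (((ℓ:ℝ)+1)/γ) (((w:ℝ)+1)/γ) i j| := by
          rw [Finset.mul_sum]
          refine Finset.sum_congr rfl fun j _ => ?_
          rw [hsum j, abs_mul, abs_of_nonneg (inv_nonneg.mpr hγ0.le)]
      _ ≤ γ⁻¹ * (K * (|S (ℓ+1) / γ - ((ℓ:ℝ)+1)/γ|
            + |(S (ℓ+1) / γ - S (ℓ-w) / γ) - ((w:ℝ)+1)/γ|)) := by
          refine mul_le_mul_of_nonneg_left ?_ (inv_nonneg.mpr hγ0.le)
          apply hLip
          · exact div_nonneg (Finset.sum_nonneg fun j hj => hpos j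
              (lt_of_lt_of_le (Finset.mem_range.mp hj) hℓN)) hγ0.le
          · positivity
          · rw [sub_nonneg]
            exact div_le_div_of_nonneg_right hmono hγ0.le |>.trans_eq rfl
          · positivity
      _ ≤ γ⁻¹ * (K * (M/γ + 2*(M/γ))) := by
          refine mul_le_mul_of_nonneg_left (mul_le_mul_of_nonneg_left ?_ hK)
            (inv_nonneg.mpr hγ0.le)
          have he : (S (ℓ+1) / γ - S (ℓ-w) / γ) - ((w:ℝ)+1)/γ
              = (S (ℓ+1) / γ - ((ℓ:ℝ)+1)/γ) - (S (ℓ-w) / γ - ((ℓ:ℝ)-w)/γ) := by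
            field_simp
            ring
          have h2 : |(S (ℓ+1) / γ - S (ℓ-w) / γ) - ((w:ℝ)+1)/γ| ≤ 2*(M/γ) := by
            rw [he]
            calc |(S (ℓ+1) / γ - ((ℓ:ℝ)+1)/γ) - (S (ℓ-w) / γ - ((ℓ:ℝ)-w)/γ)|
                ≤ |S (ℓ+1) / γ - ((ℓ:ℝ)+1)/γ| + |S (ℓ-w) / γ - ((ℓ:ℝ)-w)/γ| :=
                  abs_sub _ _
              _ ≤ M/γ + M/γ := add_le_add hd1 hd2
              _ = 2*(M/γ) := by ring
          exact add_le_add hd1 h2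
      _ = 3 * K * M / γ^2 := by field_simp; ring
  · positivity

end Det

theorem Cconst_random_grid_littleO
    {Ω : Type*} [MeasurableSpace Ω] (P : Measure Ω) [IsProbabilityMeasure P]
    {J : Type*} [Fintype J] [DecidableEq J] [Nonempty J]
    (Λ : ℝ → ℝ → Matrix J J ℝ) (K : ℝ) (hK : 0 ≤ K)
    (hLip : ∀ s₁ s₂ v₁ v₂ : ℝ, 0 ≤ s₁ → 0 ≤ s₂ → 0 ≤ v₁ → 0 ≤ v₂ →
      ∀ i : J, ∑ j, |Λ s₁ v₁ i j - Λ s₂ v₂ i j| ≤ K * (|s₁ - s₂| + |v₁ - v₂|))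
    -- (E_i) is an i.i.d. sequence of rate-one exponential random variables
    (E : ℕ → Ω → ℝ) (hEmeas : ∀ i, Measurable (E i))
    (hEindep : iIndepFun E P)
    (hEexp : ∀ i, P.map (E i) = expMeasure 1)
    (q ε : ℝ) (hq : 1 < q) (hε : 0 < ε) (hε1 : ε < 1) :
    ∃ β : ℝ, 0 < β ∧
      (fun γ : ℝ =>
        (P {ω |
          β * Real.log γ * γ ^ (-(3:ℝ)/2 + ε/2) ≤
            Cconst
              -- the random matrices Q^{(γ)}(ℓ,w), built from the arrival times
              -- χ^{(γ)}_ℓ = (E_1 + ⋯ + E_ℓ)/γ of a Poisson process of intensity γ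
              (fun ℓ w => 1 + γ⁻¹ •
                Λ ((∑ i ∈ Finset.range (ℓ+1), E i ω) / γ)
                  ((∑ i ∈ Finset.range (ℓ+1), E i ω) / γ -
                    (∑ i ∈ Finset.range (ℓ-w), E i ω) / γ))
              -- the deterministic matrices Q̃^{(γ)}(ℓ,w)
              (fun ℓ w => 1 + γ⁻¹ • Λ (((ℓ:ℝ)+1)/γ) (((w:ℝ)+1)/γ))
              ⌊γ ^ ((1:ℝ) + ε)⌋₊}).toReal)
      =o[atTop] fun γ : ℝ => γ ^ (-q) := by
  classical
  refine ⟨3*K+1, by linarith, ?_⟩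
  -- notation
  set Mf : ℝ → ℝ := fun γ => Real.log γ * γ ^ ((1+ε)/2) with hMf
  set tf : ℝ → ℝ := fun γ => Real.log γ / (4 * γ ^ ((1+ε)/2)) with htf
  set Nf : ℝ → ℕ := fun γ => ⌊γ ^ ((1:ℝ) + ε)⌋₊ with hNf
  set B : ℝ → ℝ := fun γ => 4 * γ ^ ((1:ℝ)+ε) * Real.exp (-(Real.log γ)^2/8) with hB
  -- t tends to 0
  have htend : Tendsto tf atTop (nhds 0) := by
    have h1 := (isLittleO_log_rpow_atTop
      (by positivity : (0:ℝ) < (1+ε)/2)).tendsto_div_nhds_zero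
    have h2 := h1.div_const 4
    rw [show (0:ℝ)/4 = 0 by norm_num] at h2
    refine h2.congr fun γ => ?_
    rw [div_div, mul_comm]
  -- B · γ^q tends to 0
  have hBtend : Tendsto (fun γ => B γ * γ ^ q) atTop (nhds 0) := by
    have h1 : Tendsto (fun u : ℝ => ((1:ℝ)+ε+q)*u - u^2/8) atTop atBot := by
      have he : (fun u : ℝ => ((1:ℝ)+ε+q)*u - u^2/8)
          = fun u => u * (((1:ℝ)+ε+q) + -(u/8)) := by funext u; ring
      rw [he]
      refine Tendsto.atTop_mul_atBot₀ tendsto_id ?_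
      refine tendsto_atBot_add_const_left _ _ ?_
      exact tendsto_neg_atTop_atBot.comp (tendsto_id.atTop_div_const (by norm_num))
    have h2 : Tendsto (fun u : ℝ => 4 * Real.exp (((1:ℝ)+ε+q)*u - u^2/8)) atTop (nhds 0) := by
      have := (Real.tendsto_exp_atBot.comp h1).const_mul (4:ℝ)
      simpa using this
    have h3 := h2.comp Real.tendsto_log_atTop
    refine Tendsto.congr' ?_ h3
    filter_upwards [eventually_gt_atTop (0:ℝ)] with γ hγ0
    show 4 * Real.exp (((1:ℝ)+ε+q) * Real.log γ - (Real.log γ)^2/8) = B γ * γ ^ q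
    rw [hB]
    simp only
    rw [Real.rpow_def_of_pos hγ0 ((1:ℝ)+ε), Real.rpow_def_of_pos hγ0 q,
      show Real.log γ * ((1:ℝ)+ε) = ((1:ℝ)+ε) * Real.log γ from mul_comm _ _,
      show Real.log γ * q = q * Real.log γ from mul_comm _ _]
    rw [mul_assoc, mul_assoc, ← Real.exp_add, ← Real.exp_add]
    congr 1
    ring
  rw [Asymptotics.isLittleO_iff]
  intro c hc
  filter_upwards [htend.eventually_le_const (by norm_num : (0:ℝ) < 1/2),
    hBtend.eventually_le_const hc, eventually_ge_atTop (2:ℝ)] with γ ht12 hBc hγ2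
  have hγ1 : (1:ℝ) < γ := by linarith
  have hγ0 : (0:ℝ) < γ := by linarith
  have hlog : 0 < Real.log γ := Real.log_pos hγ1
  have hA0 : (0:ℝ) < γ ^ ((1+ε)/2) := Real.rpow_pos_of_pos hγ0 _
  have hA2 : (γ ^ ((1+ε)/2))^2 = γ ^ ((1:ℝ)+ε) := by
    rw [← Real.rpow_natCast (γ ^ ((1+ε)/2)) 2, ← Real.rpow_mul hγ0.le]
    norm_num
  have hM0 : 0 ≤ Mf γ := by
    have : Mf γ = Real.log γ * γ ^ ((1+ε)/2) := rfl
    rw [this]; positivity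
  have ht0 : 0 ≤ tf γ := by
    have : tf γ = Real.log γ / (4 * γ ^ ((1+ε)/2)) := rfl
    rw [this]; positivity
  have hid : γ ^ ((1+ε)/2) / γ^2 = γ ^ (-(3:ℝ)/2 + ε/2) := by
    rw [show (γ:ℝ)^2 = γ ^ ((2:ℝ)) by
        rw [← Real.rpow_natCast γ 2]; norm_num,
      ← Real.rpow_sub hγ0]
    congr 1
    ring
  set U1 : Set Ω := ⋃ i ∈ Finset.range (Nf γ), {ω | E i ω < 0} with hU1def
  set U2 : Set Ω := ⋃ ℓ ∈ Finset.range (Nf γ + 1),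
    {ω | Mf γ ≤ |∑ i ∈ Finset.range ℓ, E i ω - ℓ|} with hU2def
  have hsub : {ω |
          (3*K+1) * Real.log γ * γ ^ (-(3:ℝ)/2 + ε/2) ≤
            Cconst
              (fun ℓ w => 1 + γ⁻¹ •
                Λ ((∑ i ∈ Finset.range (ℓ+1), E i ω) / γ)
                  ((∑ i ∈ Finset.range (ℓ+1), E i ω) / γ -
                    (∑ i ∈ Finset.range (ℓ-w), E i ω) / γ))
              (fun ℓ w => 1 + γ⁻¹ • Λ (((ℓ:ℝ)+1)/γ) (((w:ℝ)+1)/γ))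
              ⌊γ ^ ((1:ℝ) + ε)⌋₊} ⊆ U1 ∪ U2 := by
    intro ω hω
    by_contra hno
    simp only [Set.mem_union, not_or] at hno
    obtain ⟨hn1, hn2⟩ := hno
    have hpos : ∀ i < Nf γ, 0 ≤ E i ω := by
      intro i hi
      by_contra hneg
      exact hn1 (Set.mem_biUnion (Finset.mem_range.mpr hi) (not_le.mp hneg))
    have hdev : ∀ ℓ ≤ Nf γ, |∑ i ∈ Finset.range ℓ, E i ω - ℓ| ≤ Mf γ := by
      intro ℓ hℓ
      by_contra hgt
      exact hn2 (Set.mem_biUnion (Finset.mem_range.mpr (Nat.lt_succ_of_le hℓ))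
        (not_le.mp hgt).le)
    have hdet := aux_det_bound Λ K hK hLip γ (Mf γ) hγ1 hM0 (Nf γ)
      (fun i => E i ω) hpos hdev
    have hωle : (3*K+1) * Real.log γ * γ ^ (-(3:ℝ)/2 + ε/2)
        ≤ 3 * K * Mf γ / γ^2 := le_trans hω (by exact hdet)
    have heq : 3 * K * Mf γ / γ^2 = 3 * K * (Real.log γ * γ ^ (-(3:ℝ)/2 + ε/2)) := by
      have : Mf γ = Real.log γ * γ ^ ((1+ε)/2) := rfl
      rw [this, ← hid]
      field_simp
    rw [heq] at hωle
    have hX : 0 < Real.log γ * γ ^ (-(3:ℝ)/2 + ε/2) := by positivity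
    nlinarith
  -- probability of the negative-value part is zero
  have hPU1 : P U1 = 0 := by
    rw [hU1def]
    refine (measure_biUnion_null_iff ((Finset.range (Nf γ)).countable_toSet)).mpr ?_
    intro i _
    have hset : {ω | E i ω < 0} = E i ⁻¹' (Set.Iio 0) := rfl
    rw [hset, ← Measure.map_apply (hEmeas i) measurableSet_Iio, hEexp i]
    have : expMeasure 1 (Set.Iio 0)
        = ∫⁻ y in Set.Iio 0, exponentialPDF 1 y := by
      rw [show expMeasure 1 = (volume : Measure ℝ).withDensity (exponentialPDF 1) from rfl,
        withDensity_apply _ measurableSet_Iio]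
    rw [this]
    exact lintegral_exponentialPDF_of_nonpos le_rfl
  -- main estimate
  have hNle : (Nf γ : ℝ) ≤ γ ^ ((1:ℝ)+ε) := Nat.floor_le (by positivity)
  have h1le : (1:ℝ) ≤ γ ^ ((1:ℝ)+ε) := Real.one_le_rpow hγ1.le (by linarith)
  have hexp_eq : -(tf γ) * Mf γ + (γ ^ ((1+ε)/2))^2 * (2*(tf γ)^2)
      = -(Real.log γ)^2/8 := by
    have h1 : tf γ = Real.log γ / (4 * γ ^ ((1+ε)/2)) := rfl
    have h2 : Mf γ = Real.log γ * γ ^ ((1+ε)/2) := rfl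
    rw [h1, h2]
    field_simp
    ring
  have hmain : (P {ω |
          (3*K+1) * Real.log γ * γ ^ (-(3:ℝ)/2 + ε/2) ≤
            Cconst
              (fun ℓ w => 1 + γ⁻¹ •
                Λ ((∑ i ∈ Finset.range (ℓ+1), E i ω) / γ)
                  ((∑ i ∈ Finset.range (ℓ+1), E i ω) / γ -
                    (∑ i ∈ Finset.range (ℓ-w), E i ω) / γ))
              (fun ℓ w => 1 + γ⁻¹ • Λ (((ℓ:ℝ)+1)/γ) (((w:ℝ)+1)/γ))
              ⌊γ ^ ((1:ℝ) + ε)⌋₊}).toReal ≤ B γ := by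
    have hP2 : P {ω |
          (3*K+1) * Real.log γ * γ ^ (-(3:ℝ)/2 + ε/2) ≤
            Cconst
              (fun ℓ w => 1 + γ⁻¹ •
                Λ ((∑ i ∈ Finset.range (ℓ+1), E i ω) / γ)
                  ((∑ i ∈ Finset.range (ℓ+1), E i ω) / γ -
                    (∑ i ∈ Finset.range (ℓ-w), E i ω) / γ))
              (fun ℓ w => 1 + γ⁻¹ • Λ (((ℓ:ℝ)+1)/γ) (((w:ℝ)+1)/γ))
              ⌊γ ^ ((1:ℝ) + ε)⌋₊} ≤ P U2 := by
      calc P _ ≤ P (U1 ∪ U2) := measure_mono hsub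
        _ ≤ P U1 + P U2 := measure_union_le _ _
        _ = P U2 := by rw [hPU1, zero_add]
    have hstep1 : (P U2).toReal
        ≤ ∑ ℓ ∈ Finset.range (Nf γ + 1),
            (P {ω | Mf γ ≤ |∑ i ∈ Finset.range ℓ, E i ω - ℓ|}).toReal := by
      have h := measure_biUnion_finset_le (μ := P) (Finset.range (Nf γ + 1))
        (fun ℓ => {ω | Mf γ ≤ |∑ i ∈ Finset.range ℓ, E i ω - ℓ|})
      refine le_trans (ENNReal.toReal_mono ?_ h) ?_
      · exact (ENNReal.sum_lt_top.mpr fun a _ => measure_lt_top P _).ne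
      · rw [ENNReal.toReal_sum fun a _ => measure_ne_top P _]
    have hstep2 : ∀ ℓ ∈ Finset.range (Nf γ + 1),
        (P {ω | Mf γ ≤ |∑ i ∈ Finset.range ℓ, E i ω - ℓ|}).toReal
          ≤ 2 * Real.exp (-(Real.log γ)^2/8) := by
      intro ℓ hℓ
      refine (aux_chernoff_abs P E hEmeas hEindep hEexp ℓ ht0 ht12).trans ?_
      have hcard : (ℓ:ℝ) ≤ (γ ^ ((1+ε)/2))^2 := by
        rw [hA2]
        refine le_trans ?_ hNle
        exact_mod_cast Nat.lt_succ_iff.mp (Finset.mem_range.mp hℓ)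
      refine mul_le_mul_of_nonneg_left (Real.exp_le_exp.mpr ?_) (by norm_num)
      rw [← hexp_eq]
      have : (ℓ:ℝ) * (2*(tf γ)^2) ≤ (γ ^ ((1+ε)/2))^2 * (2*(tf γ)^2) := by
        refine mul_le_mul_of_nonneg_right hcard (by positivity)
      linarith
    calc (P _).toReal
        ≤ (P U2).toReal := ENNReal.toReal_mono (measure_ne_top P _) hP2
      _ ≤ ∑ ℓ ∈ Finset.range (Nf γ + 1),
            (P {ω | Mf γ ≤ |∑ i ∈ Finset.range ℓ, E i ω - ℓ|}).toReal := hstep1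
      _ ≤ ∑ _ℓ ∈ Finset.range (Nf γ + 1), 2 * Real.exp (-(Real.log γ)^2/8) :=
          Finset.sum_le_sum hstep2
      _ = ((Nf γ : ℝ) + 1) * (2 * Real.exp (-(Real.log γ)^2/8)) := by
          rw [Finset.sum_const, Finset.card_range, nsmul_eq_mul]
          push_cast
          ring
      _ ≤ (2 * γ ^ ((1:ℝ)+ε)) * (2 * Real.exp (-(Real.log γ)^2/8)) := by
          refine mul_le_mul_of_nonneg_right (by linarith) (by positivity)
      _ = B γ := by rw [hB]; ring
  -- conclude
  have hBfin : B γ ≤ c * γ ^ (-q) := by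
    have hsplit : B γ = (B γ * γ ^ q) * γ ^ (-q) := by
      rw [mul_assoc, ← Real.rpow_add hγ0, add_neg_cancel, Real.rpow_zero, mul_one]
    rw [hsplit]
    exact mul_le_mul_of_nonneg_right hBc (Real.rpow_pos_of_pos hγ0 _).le
  rw [Real.norm_eq_abs, Real.norm_eq_abs, abs_of_nonneg ENNReal.toReal_nonneg,
    abs_of_pos (Real.rpow_pos_of_pos hγ0 _)]
  exact hmain.trans hBfin

end
end

section
/- Let (E_i)_{i≥1} and (F_i)_{i≥1} be two independent i.i.d. sequences of exponential random variables with rate 1, and for γ > 0 set χ^{(γ)}_ℓ = (E_1 + ⋯ + E_ℓ)/γ and θ^{(γ)}_ℓ = (F_1 + ⋯ + F_ℓ)/γ (so these are distributed as the arrival times of two independent Poisson processes with intensity γ). Then for every q > 0 and every ε > 0 there exists a constant α > 0 (depending only on q and ε) such that P( max_{1 ≤ ℓ ≤ ⌊γ^{1+ε}⌋} |χ^{(γ)}_ℓ − θ^{(γ)}_ℓ| ≥ α (log γ) γ^{−1/2+ε/2} ) = o(γ^{−q}) as γ → ∞. -/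
open MeasureTheory ProbabilityTheory Filter Asymptotics

noncomputable section

namespace PoissonGridsAux


open Real Topology


lemma expMGF_lintegral {t : ℝ} (ht : t < 1) :
    ∫⁻ x, ENNReal.ofReal (exp (t * x)) ∂(expMeasure 1) = ENNReal.ofReal (1 - t)⁻¹ := by
  have hmeas : Measurable fun x : ℝ => ENNReal.ofReal (exp (t * x)) := (measurable_const.mul measurable_id).exp.ennreal_ofReal
  rw [expMeasure, gammaMeasure, lintegral_withDensity_eq_lintegral_mul _
    (by exact (measurable_gammaPDFReal 1 1).ennreal_ofReal) hmeas]
  have h1t : (0:ℝ) < 1 - t := by linarith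
  have hfun : (fun x => gammaPDF 1 1 x * ENNReal.ofReal (exp (t * x)))
      = (Set.Ici (0:ℝ)).indicator (fun x => ENNReal.ofReal (exp ((t-1) * x))) := by
    funext x
    rw [gammaPDF, gammaPDFReal]
    by_cases hx : 0 ≤ x
    · simp only [hx, if_true, Set.indicator_of_mem (Set.mem_Ici.mpr hx)]
      rw [← ENNReal.ofReal_mul (by positivity)]
      congr 1
      simp [Real.Gamma_one, ← Real.exp_add]
      ring_nf
    · simp [hx, Set.indicator_of_notMem (Set.notMem_Ici.mpr (lt_of_not_ge hx) : x ∉ Set.Ici 0)]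
  simp only [Pi.mul_apply]
  rw [show (fun a => gammaPDF 1 1 a * ENNReal.ofReal (exp (t * a))) = (Set.Ici (0:ℝ)).indicator (fun x => ENNReal.ofReal (exp ((t-1) * x))) from hfun, lintegral_indicator measurableSet_Ici]
  have hInt : IntegrableOn (fun x : ℝ => exp ((t-1) * x)) (Set.Ici 0) := by
    rw [integrableOn_Ici_iff_integrableOn_Ioi]
    have := exp_neg_integrableOn_Ioi 0 h1t
    simpa [neg_mul, neg_sub] using this
  rw [← ofReal_integral_eq_lintegral_ofReal hInt (ae_of_all _ fun x => (exp_pos _).le)]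
  congr 1
  rw [MeasureTheory.integral_Ici_eq_integral_Ioi]
  have key := integral_comp_mul_left_Ioi (fun x => exp (-x)) 0 h1t
  simp only [mul_zero, integral_exp_neg_Ioi, neg_zero, Real.exp_zero, smul_eq_mul, mul_one] at key
  have : (fun x : ℝ => exp ((t-1) * x)) = fun x => exp (-((1-t) * x)) := by
    funext x; ring_nf
  rw [this, key]

variable {Ω : Type*} [MeasurableSpace Ω] {P : Measure Ω} [IsProbabilityMeasure P]


lemma expMGF_integrable {t : ℝ} (ht : t < 1) :
    Integrable (fun x => exp (t * x)) (expMeasure 1) := by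
  refine ⟨((measurable_const.mul measurable_id').exp).aestronglyMeasurable, ?_⟩
  rw [hasFiniteIntegral_iff_ofReal (ae_of_all _ fun x => (exp_pos _).le)]
  rw [expMGF_lintegral ht]
  exact ENNReal.ofReal_lt_top

lemma expMGF_integral {t : ℝ} (ht : t < 1) :
    ∫ x, exp (t * x) ∂(expMeasure 1) = (1 - t)⁻¹ := by
  rw [integral_eq_lintegral_of_nonneg_ae (ae_of_all _ fun x => (exp_pos _).le)
    (by fun_prop : Measurable fun x : ℝ => exp (t * x)).aestronglyMeasurable]
  rw [expMGF_lintegral ht, ENNReal.toReal_ofReal (inv_nonneg.mpr (by linarith))]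


lemma mapExp_integrable {X : Ω → ℝ} (hX : Measurable X) (hmap : P.map X = expMeasure 1)
    {t : ℝ} (ht : t < 1) : Integrable (fun ω => exp (t * X ω)) P := by
  have := (integrable_map_measure ((by fun_prop : Measurable fun x : ℝ => exp (t * x)).aestronglyMeasurable)
    hX.aemeasurable).mp (by rw [hmap]; exact expMGF_integrable ht)
  simpa [Function.comp_def] using this

lemma mapExp_mgf {X : Ω → ℝ} (hX : Measurable X) (hmap : P.map X = expMeasure 1)
    {t : ℝ} (ht : t < 1) : mgf X P t = (1 - t)⁻¹ := by
  rw [mgf, ← integral_map hX.aemeasurable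
    ((by fun_prop : Measurable fun x : ℝ => exp (t * x)).aestronglyMeasurable), hmap, expMGF_integral ht]

lemma iIndepFun_precomp {Ω : Type*} [MeasurableSpace Ω] {P : Measure Ω}
    {ι ι' : Type*} {f : ι → Ω → ℝ} (g : ι' → ι) (hg : Function.Injective g)
    (h : iIndepFun f P) :
    iIndepFun (fun i => f (g i)) P := by
  classical
  rw [iIndepFun_iff_measure_inter_preimage_eq_mul] at h ⊢
  intro S sets hsets
  have key := h (S.map ⟨g, hg⟩)
    (sets := fun i => Function.extend g sets (fun _ => Set.univ) i) ?_
  · have e1 : (⋂ i ∈ S.map ⟨g, hg⟩, f i ⁻¹' Function.extend g sets (fun _ => Set.univ) i)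
        = ⋂ j ∈ S, (fun ω => f (g j) ω) ⁻¹' sets j := by
      ext ω
      simp only [Set.mem_iInter, Finset.mem_map, Function.Embedding.coeFn_mk]
      constructor
      · intro hh j hj
        have := hh (g j) ⟨j, hj, rfl⟩
        rwa [hg.extend_apply] at this
      · rintro hh i ⟨j, hj, rfl⟩
        rw [hg.extend_apply]
        exact hh j hj
    have e2 : ∏ i ∈ S.map ⟨g, hg⟩, P (f i ⁻¹' Function.extend g sets (fun _ => Set.univ) i)
        = ∏ j ∈ S, P ((fun ω => f (g j) ω) ⁻¹' sets j) := by
      rw [Finset.prod_map]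
      exact Finset.prod_congr rfl fun j _ => by rw [Function.Embedding.coeFn_mk, hg.extend_apply]
    rw [e1, e2] at key
    exact key
  · intro i hi
    rw [Finset.mem_map] at hi
    obtain ⟨j, hj, rfl⟩ := hi
    simp only [Function.Embedding.coeFn_mk, hg.extend_apply]
    exact hsets j hj


lemma indepFun_sums {E F : ℕ → Ω → ℝ}
    (hEmeas : ∀ i, Measurable (E i)) (hFmeas : ∀ i, Measurable (F i))
    (hindep : iIndepFun (Sum.elim E F) P) (ℓ : ℕ) :
    IndepFun (fun ω => ∑ i ∈ Finset.range ℓ, E i ω)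
      (fun ω => ∑ i ∈ Finset.range ℓ, F i ω) P := by
  classical
  have hmeas : ∀ i : ℕ ⊕ ℕ, Measurable (Sum.elim E F i) := by
    rintro (i | i); exacts [hEmeas i, hFmeas i]
  set S : Finset (ℕ ⊕ ℕ) := (Finset.range ℓ).map ⟨Sum.inl, Sum.inl_injective⟩ with hS
  set T : Finset (ℕ ⊕ ℕ) := (Finset.range ℓ).map ⟨Sum.inr, Sum.inr_injective⟩ with hT
  have hdisj : Disjoint S T := by
    rw [Finset.disjoint_left]
    rintro a haS haT
    rw [hS, Finset.mem_map] at haS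
    rw [hT, Finset.mem_map] at haT
    obtain ⟨i, _, rfl⟩ := haS
    obtain ⟨j, _, h⟩ := haT
    exact Sum.inl_ne_inr h.symm
  have base := hindep.indepFun_finset S T hdisj hmeas
  have hφ : ∀ (U : Finset (ℕ ⊕ ℕ)), Measurable (fun v : (i : U) → ℝ => ∑ i : U, v i) :=
    fun U => Finset.measurable_sum _ fun i _ => measurable_pi_apply i
  have comp := base.comp (hφ S) (hφ T)
  have e1 : ((fun v : (i : S) → ℝ => ∑ i : S, v i) ∘ fun a (i : S) => Sum.elim E F i a)
      = fun ω => ∑ i ∈ Finset.range ℓ, E i ω := by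
    funext ω
    simp only [Function.comp_apply]
    rw [Finset.sum_coe_sort S (fun i => Sum.elim E F i ω), hS, Finset.sum_map]
    simp
  have e2 : ((fun v : (i : T) → ℝ => ∑ i : T, v i) ∘ fun a (i : T) => Sum.elim E F i a)
      = fun ω => ∑ i ∈ Finset.range ℓ, F i ω := by
    funext ω
    simp only [Function.comp_apply]
    rw [Finset.sum_coe_sort T (fun i => Sum.elim E F i ω), hT, Finset.sum_map]
    simp
  rwa [e1, e2] at comp


lemma chernoff_one_sided {E F : ℕ → Ω → ℝ}
    (hEmeas : ∀ i, Measurable (E i)) (hFmeas : ∀ i, Measurable (F i))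
    (hindep : iIndepFun (Sum.elim E F) P)
    (hEexp : ∀ i, P.map (E i) = expMeasure 1) (hFexp : ∀ i, P.map (F i) = expMeasure 1)
    {t : ℝ} (ht0 : 0 < t) (ht : t ≤ 1/2) (c : ℝ) (ℓ : ℕ) :
    (P {ω | c ≤ (∑ i ∈ Finset.range ℓ, E i ω) - ∑ i ∈ Finset.range ℓ, F i ω}).toReal
      ≤ exp (-(t*c) + 2*t^2*ℓ) := by
  have t1 : t < 1 := by linarith
  have nt1 : -t < 1 := by linarith
  have hE : iIndepFun E P := by
    have := iIndepFun_precomp Sum.inl Sum.inl_injective hindep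
    simpa using this
  have hF : iIndepFun F P := by
    have := iIndepFun_precomp Sum.inr Sum.inr_injective hindep
    simpa using this
  set SA : Ω → ℝ := ∑ i ∈ Finset.range ℓ, E i with hSA
  set SB : Ω → ℝ := ∑ i ∈ Finset.range ℓ, F i with hSB
  have hSAapp : ∀ ω, SA ω = ∑ i ∈ Finset.range ℓ, E i ω := fun ω => by
    rw [hSA, Finset.sum_apply]
  have hSBapp : ∀ ω, SB ω = ∑ i ∈ Finset.range ℓ, F i ω := fun ω => by
    rw [hSB, Finset.sum_apply]
  have hintA : Integrable (fun ω => exp (t * SA ω)) P :=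
    hE.integrable_exp_mul_sum hEmeas fun i _ => mapExp_integrable (hEmeas i) (hEexp i) t1
  have hintnegB : Integrable (fun ω => exp (t * (-SB) ω)) P := by
    have h1 := hF.integrable_exp_mul_sum (t := -t) (s := Finset.range ℓ) hFmeas
      fun i _ => mapExp_integrable (hFmeas i) (hFexp i) nt1
    have h2 : (fun ω => exp (t * (-SB) ω))
        = fun ω => exp (-t * (∑ i ∈ Finset.range ℓ, F i) ω) := by
      funext ω
      rw [Pi.neg_apply, ← hSB]
      ring_nf
    rw [h2]
    exact h1
  have hAB : IndepFun SA (-SB) P := by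
    have base := indepFun_sums hEmeas hFmeas hindep ℓ
    have := base.comp measurable_id measurable_neg
    have e1 : (id ∘ fun ω => ∑ i ∈ Finset.range ℓ, E i ω) = SA := by
      funext ω; simp [hSAapp]
    have e2 : ((fun x : ℝ => -x) ∘ fun ω => ∑ i ∈ Finset.range ℓ, F i ω) = -SB := by
      funext ω; simp [hSBapp]
    rwa [e1, e2] at this
  have h_int : Integrable (fun ω => exp (t * (SA + -SB) ω)) P :=
    hAB.integrable_exp_mul_add hintA hintnegB
  have key := measure_ge_le_exp_mul_mgf (μ := P) (X := SA + -SB) c ht0.le h_int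
  -- compute the mgf
  have hmgfA : mgf SA P t = (1 - t)⁻¹ ^ ℓ := by
    rw [hSA, hE.mgf_sum hEmeas]
    rw [Finset.prod_congr rfl fun i _ => mapExp_mgf (hEmeas i) (hEexp i) t1]
    simp
  have hmgfB : mgf (-SB) P t = (1 + t)⁻¹ ^ ℓ := by
    rw [mgf_neg, hSB, hF.mgf_sum hFmeas]
    rw [Finset.prod_congr rfl fun i _ => mapExp_mgf (hFmeas i) (hFexp i) nt1]
    simp [sub_neg_eq_add]
  have hmgf : mgf (SA + -SB) P t = (1 - t)⁻¹ ^ ℓ * (1 + t)⁻¹ ^ ℓ := by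
    rw [hAB.mgf_add hintA.aestronglyMeasurable hintnegB.aestronglyMeasurable, hmgfA, hmgfB]
  have hmgf_le : mgf (SA + -SB) P t ≤ exp (2*t^2*ℓ) := by
    rw [hmgf, ← mul_pow, ← mul_inv]
    have h2 : (0:ℝ) < 1 - t^2 := by nlinarith
    have e3 : (1 - t) * (1 + t) = 1 - t^2 := by ring
    rw [e3]
    have step1 : (1 - t^2)⁻¹ ≤ 1 + 2*t^2 := by
      rw [inv_le_iff_one_le_mul₀ h2]
      have htt : t * t ≤ 1/4 := by nlinarith
      nlinarith [sq_nonneg t]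
    have step2 : (1:ℝ) + 2*t^2 ≤ exp (2*t^2) := by
      have := Real.add_one_le_exp (2*t^2)
      linarith
    calc (1 - t^2)⁻¹ ^ ℓ ≤ (exp (2*t^2)) ^ ℓ := by
          apply pow_le_pow_left₀ (inv_nonneg.mpr h2.le) (step1.trans step2)
      _ = exp (2*t^2*ℓ) := by rw [← Real.exp_nat_mul]; ring_nf
  have hset : {ω | c ≤ (∑ i ∈ Finset.range ℓ, E i ω) - ∑ i ∈ Finset.range ℓ, F i ω}
      = {ω | c ≤ (SA + -SB) ω} := by
    ext ω
    simp only [Set.mem_setOf_eq, Pi.add_apply, Pi.neg_apply, hSAapp, hSBapp, sub_eq_add_neg]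
  rw [hset]
  calc (P {ω | c ≤ (SA + -SB) ω}).toReal ≤ exp (-t * c) * mgf (SA + -SB) P t := key
    _ ≤ exp (-t * c) * exp (2*t^2*ℓ) := by
        exact mul_le_mul_of_nonneg_left hmgf_le (exp_pos _).le
    _ = exp (-(t*c) + 2*t^2*ℓ) := by rw [← Real.exp_add, neg_mul]


lemma chernoff_abs {E F : ℕ → Ω → ℝ}
    (hEmeas : ∀ i, Measurable (E i)) (hFmeas : ∀ i, Measurable (F i))
    (hindep : iIndepFun (Sum.elim E F) P)
    (hEexp : ∀ i, P.map (E i) = expMeasure 1) (hFexp : ∀ i, P.map (F i) = expMeasure 1)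
    {t : ℝ} (ht0 : 0 < t) (ht : t ≤ 1/2) (c : ℝ) (ℓ : ℕ) :
    (P {ω | c ≤ |(∑ i ∈ Finset.range ℓ, E i ω) - ∑ i ∈ Finset.range ℓ, F i ω|}).toReal
      ≤ 2 * exp (-(t*c) + 2*t^2*ℓ) := by
  have hindep' : iIndepFun (Sum.elim F E) P := by
    have := iIndepFun_precomp Sum.swap (Function.LeftInverse.injective Sum.swap_leftInverse) hindep
    have e : (fun i => Sum.elim E F (Sum.swap i)) = Sum.elim F E := by
      funext i; cases i <;> simp
    rwa [e] at this
  have h1 := chernoff_one_sided hEmeas hFmeas hindep hEexp hFexp ht0 ht c ℓ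
  have h2 := chernoff_one_sided hFmeas hEmeas hindep' hFexp hEexp ht0 ht c ℓ
  set A := {ω | c ≤ (∑ i ∈ Finset.range ℓ, E i ω) - ∑ i ∈ Finset.range ℓ, F i ω}
  set B := {ω | c ≤ (∑ i ∈ Finset.range ℓ, F i ω) - ∑ i ∈ Finset.range ℓ, E i ω}
  have hsub : {ω | c ≤ |(∑ i ∈ Finset.range ℓ, E i ω) - ∑ i ∈ Finset.range ℓ, F i ω|}
      ⊆ A ∪ B := by
    intro ω hω
    simp only [Set.mem_setOf_eq] at hω
    rcases le_abs.mp hω with h | h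
    · exact Or.inl h
    · refine Or.inr ?_
      show c ≤ (∑ i ∈ Finset.range ℓ, F i ω) - ∑ i ∈ Finset.range ℓ, E i ω
      linarith
  calc (P {ω | c ≤ |(∑ i ∈ Finset.range ℓ, E i ω) - ∑ i ∈ Finset.range ℓ, F i ω|}).toReal
      ≤ (P (A ∪ B)).toReal := by
        apply ENNReal.toReal_mono (measure_ne_top _ _) (measure_mono hsub)
    _ ≤ (P A + P B).toReal := by
        apply ENNReal.toReal_mono _ (measure_union_le A B)
        exact ENNReal.add_ne_top.mpr ⟨measure_ne_top _ _, measure_ne_top _ _⟩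
    _ ≤ (P A).toReal + (P B).toReal := ENNReal.toReal_add_le
    _ ≤ exp (-(t*c) + 2*t^2*ℓ) + exp (-(t*c) + 2*t^2*ℓ) := add_le_add h1 h2
    _ = 2 * exp (-(t*c) + 2*t^2*ℓ) := by ring

lemma tail_littleO (p q : ℝ) :
    (fun γ : ℝ => 4 * γ ^ p * exp (-(1/8) * (log γ)^2)) =o[atTop] fun γ : ℝ => γ ^ (-q) := by
  rw [isLittleO_iff_tendsto']
  swap
  · filter_upwards [eventually_gt_atTop (0:ℝ)] with γ hγ h0
    exact absurd h0 (ne_of_gt (Real.rpow_pos_of_pos hγ _))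
  have hψ : Tendsto (fun L : ℝ => (p + q) * L - L^2/8) atTop atBot := by
    apply tendsto_atBot_mono' atTop (f₁ := fun L : ℝ => -L)
    · filter_upwards [eventually_ge_atTop (8*(p+q+1)), eventually_ge_atTop (0:ℝ)] with L hL1 hL0
      nlinarith [mul_nonneg (by linarith : (0:ℝ) ≤ L - 8*(p+q+1)) hL0]
    · exact tendsto_neg_atBot_iff.mpr tendsto_id
  have hcomp : Tendsto (fun γ : ℝ => (p + q) * log γ - (log γ)^2/8) atTop atBot :=
    hψ.comp Real.tendsto_log_atTop
  have hexp : Tendsto (fun γ : ℝ => 4 * exp ((p + q) * log γ - (log γ)^2/8)) atTop (𝓝 0) := by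
    have := (Real.tendsto_exp_atBot.comp hcomp).const_mul (4:ℝ)
    simpa using this
  apply hexp.congr'
  filter_upwards [eventually_gt_atTop (0:ℝ)] with γ hγ
  rw [Real.rpow_def_of_pos hγ p, Real.rpow_def_of_pos hγ (-q)]
  rw [mul_assoc, ← Real.exp_add, mul_div_assoc, ← Real.exp_sub]
  congr 1
  ring


end PoissonGridsAux

open PoissonGridsAux Real Topology

theorem poisson_grids_max_deviation_littleO
    {Ω : Type*} [MeasurableSpace Ω] (P : Measure Ω) [IsProbabilityMeasure P]
    (E F : ℕ → Ω → ℝ)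
    (hEmeas : ∀ i, Measurable (E i)) (hFmeas : ∀ i, Measurable (F i))
    -- the joint family (E_i, F_i) is independent (E's independent of F's)
    (hindep : iIndepFun (Sum.elim E F) P)
    -- each variable is exponential with rate 1
    (hEexp : ∀ i, P.map (E i) = expMeasure 1)
    (hFexp : ∀ i, P.map (F i) = expMeasure 1)
    (q ε : ℝ) (hq : 0 < q) (hε : 0 < ε) :
    ∃ α : ℝ, 0 < α ∧
      (fun γ : ℝ =>
        (P {ω |
          α * Real.log γ * γ ^ (-(1:ℝ)/2 + ε/2) ≤
            -- max over 0 ≤ ℓ ≤ ⌊γ^{1+ε}⌋ of |χ^{(γ)}_ℓ − θ^{(γ)}_ℓ|, where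
            -- χ^{(γ)}_ℓ = (E_1 + ⋯ + E_ℓ)/γ, θ^{(γ)}_ℓ = (F_1 + ⋯ + F_ℓ)/γ
            -- (the ℓ = 0 term vanishes since χ^{(γ)}_0 = θ^{(γ)}_0 = 0)
            (Finset.range (⌊γ ^ ((1:ℝ) + ε)⌋₊ + 1)).sup' Finset.nonempty_range_add_one
              (fun ℓ =>
                |(∑ i ∈ Finset.range ℓ, E i ω) / γ -
                  (∑ i ∈ Finset.range ℓ, F i ω) / γ|)}).toReal)
      =o[atTop] fun γ : ℝ => γ ^ (-q) := by

  classical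
  refine ⟨1, one_pos, ?_⟩
  set g : ℝ → ℝ := fun γ => 4 * γ ^ ((1:ℝ)+ε) * exp (-(1/8) * (log γ)^2) with hgdef
  -- eventually t γ ≤ 1/2
  have hts : ∀ᶠ γ : ℝ in atTop, 4⁻¹ * log γ * γ ^ (-(1:ℝ)/2 - ε/2) ≤ 1/2 := by
    have hpos : 0 < (1:ℝ)/2 + ε/2 := by linarith
    have h1 : Tendsto (fun γ : ℝ => log γ / γ ^ ((1:ℝ)/2 + ε/2)) atTop (𝓝 0) :=
      (isLittleO_log_rpow_atTop hpos).tendsto_div_nhds_zero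
    have h2 : Tendsto (fun γ : ℝ => 4⁻¹ * (log γ / γ ^ ((1:ℝ)/2 + ε/2))) atTop (𝓝 0) := by
      simpa using h1.const_mul (4⁻¹ : ℝ)
    have h3 := h2.eventually_le_const (show (0:ℝ) < 1/2 by norm_num)
    filter_upwards [h3, eventually_gt_atTop (0:ℝ)] with γ hγ hγ0
    have hx : γ ^ (-(1:ℝ)/2 - ε/2) = (γ ^ ((1:ℝ)/2 + ε/2))⁻¹ := by
      rw [← Real.rpow_neg hγ0.le]
      congr 1
      ring
    rw [hx, mul_assoc, ← div_eq_mul_inv]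
    exact hγ
  have hbound : ∀ᶠ γ : ℝ in atTop,
      (P {ω |
          1 * Real.log γ * γ ^ (-(1:ℝ)/2 + ε/2) ≤
            (Finset.range (⌊γ ^ ((1:ℝ) + ε)⌋₊ + 1)).sup' Finset.nonempty_range_add_one
              (fun ℓ =>
                |(∑ i ∈ Finset.range ℓ, E i ω) / γ -
                  (∑ i ∈ Finset.range ℓ, F i ω) / γ|)}).toReal ≤ g γ := by
    filter_upwards [hts, eventually_gt_atTop (1:ℝ)] with γ htγ hγ1
    have hγ0 : (0:ℝ) < γ := lt_trans one_pos hγ1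
    have hL0 : 0 < log γ := Real.log_pos hγ1
    set N := ⌊γ ^ ((1:ℝ)+ε)⌋₊ with hNdef
    set t := 4⁻¹ * log γ * γ ^ (-(1:ℝ)/2 - ε/2) with htdef
    have ht0 : 0 < t := by
      rw [htdef]; positivity
    set c := γ * (1 * Real.log γ * γ ^ (-(1:ℝ)/2 + ε/2)) with hcdef
    set A : ℕ → Set Ω := fun ℓ =>
      {ω | c ≤ |(∑ i ∈ Finset.range ℓ, E i ω) - ∑ i ∈ Finset.range ℓ, F i ω|} with hAdef
    have hsub : {ω |
          1 * Real.log γ * γ ^ (-(1:ℝ)/2 + ε/2) ≤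
            (Finset.range (N + 1)).sup' Finset.nonempty_range_add_one
              (fun ℓ =>
                |(∑ i ∈ Finset.range ℓ, E i ω) / γ -
                  (∑ i ∈ Finset.range ℓ, F i ω) / γ|)}
        ⊆ ⋃ ℓ ∈ Finset.range (N + 1), A ℓ := by
      intro ω hω
      simp only [Set.mem_setOf_eq] at hω
      obtain ⟨ℓ, hℓ, hle⟩ := (Finset.le_sup'_iff _).mp hω
      refine Set.mem_biUnion hℓ ?_
      show c ≤ |(∑ i ∈ Finset.range ℓ, E i ω) - ∑ i ∈ Finset.range ℓ, F i ω|
      rw [div_sub_div_same, abs_div, abs_of_pos hγ0] at hle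
      rw [hcdef]
      calc γ * (1 * Real.log γ * γ ^ (-(1:ℝ)/2 + ε/2))
          ≤ γ * (|(∑ i ∈ Finset.range ℓ, E i ω) - ∑ i ∈ Finset.range ℓ, F i ω| / γ) :=
            mul_le_mul_of_nonneg_left hle hγ0.le
        _ = |(∑ i ∈ Finset.range ℓ, E i ω) - ∑ i ∈ Finset.range ℓ, F i ω| := by
            field_simp
    have step1 : P {ω |
          1 * Real.log γ * γ ^ (-(1:ℝ)/2 + ε/2) ≤
            (Finset.range (N + 1)).sup' Finset.nonempty_range_add_one
              (fun ℓ =>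
                |(∑ i ∈ Finset.range ℓ, E i ω) / γ -
                  (∑ i ∈ Finset.range ℓ, F i ω) / γ|)}
        ≤ ∑ ℓ ∈ Finset.range (N + 1), P (A ℓ) :=
      (measure_mono hsub).trans (measure_biUnion_finset_le _ _)
    have hsum_ne : ∑ ℓ ∈ Finset.range (N + 1), P (A ℓ) ≠ ⊤ := by
      refine (ENNReal.sum_lt_top.mpr fun ℓ _ => measure_lt_top P _).ne
    have step2 : (P {ω |
          1 * Real.log γ * γ ^ (-(1:ℝ)/2 + ε/2) ≤
            (Finset.range (N + 1)).sup' Finset.nonempty_range_add_one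
              (fun ℓ =>
                |(∑ i ∈ Finset.range ℓ, E i ω) / γ -
                  (∑ i ∈ Finset.range ℓ, F i ω) / γ|)}).toReal
        ≤ ∑ ℓ ∈ Finset.range (N + 1), (P (A ℓ)).toReal := by
      refine (ENNReal.toReal_mono hsum_ne step1).trans ?_
      rw [ENNReal.toReal_sum fun ℓ _ => measure_ne_top _ _]
    have hterm : ∀ ℓ ∈ Finset.range (N + 1),
        (P (A ℓ)).toReal ≤ 2 * exp (-(t*c) + 2*t^2*(N:ℝ)) := by
      intro ℓ hℓ
      have hℓN : (ℓ:ℝ) ≤ (N:ℝ) := by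
        exact_mod_cast Nat.lt_succ_iff.mp (Finset.mem_range.mp hℓ)
      refine (chernoff_abs hEmeas hFmeas hindep hEexp hFexp ht0 htγ c ℓ).trans ?_
      have : -(t*c) + 2*t^2*(ℓ:ℝ) ≤ -(t*c) + 2*t^2*(N:ℝ) := by
        have h2 : 2*t^2*(ℓ:ℝ) ≤ 2*t^2*(N:ℝ) :=
          mul_le_mul_of_nonneg_left hℓN (by positivity)
        linarith
      exact mul_le_mul_of_nonneg_left (exp_le_exp.mpr this) (by norm_num)
    have step3 : ∑ ℓ ∈ Finset.range (N + 1), (P (A ℓ)).toReal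
        ≤ ((N:ℝ) + 1) * (2 * exp (-(t*c) + 2*t^2*(N:ℝ))) := by
      have := Finset.sum_le_card_nsmul (Finset.range (N + 1)) _ _ hterm
      rw [Finset.card_range, nsmul_eq_mul] at this
      exact_mod_cast this
    have hN : (N:ℝ) ≤ γ ^ ((1:ℝ)+ε) := Nat.floor_le (Real.rpow_nonneg hγ0.le _)
    have hge1 : (1:ℝ) ≤ γ ^ ((1:ℝ)+ε) := Real.one_le_rpow hγ1.le (by linarith)
    have htc : t * c = 4⁻¹ * (log γ)^2 := by
      have hprod : γ ^ (-(1:ℝ)/2 - ε/2) * γ * γ ^ (-(1:ℝ)/2 + ε/2) = 1 := by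
        calc γ ^ (-(1:ℝ)/2 - ε/2) * γ * γ ^ (-(1:ℝ)/2 + ε/2)
            = γ ^ (-(1:ℝ)/2 - ε/2) * γ ^ (1:ℝ) * γ ^ (-(1:ℝ)/2 + ε/2) := by
              rw [Real.rpow_one]
          _ = γ ^ ((-(1:ℝ)/2 - ε/2) + 1 + (-(1:ℝ)/2 + ε/2)) := by
              rw [← Real.rpow_add hγ0, ← Real.rpow_add hγ0]
          _ = 1 := by
              rw [show (-(1:ℝ)/2 - ε/2) + 1 + (-(1:ℝ)/2 + ε/2) = 0 by ring, Real.rpow_zero]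
      have expand : t * c = 4⁻¹ * (log γ)^2 *
          (γ ^ (-(1:ℝ)/2 - ε/2) * γ * γ ^ (-(1:ℝ)/2 + ε/2)) := by
        rw [htdef, hcdef]; ring
      rw [expand, hprod, mul_one]
    have h2t2 : 2*t^2*(N:ℝ) ≤ 8⁻¹ * (log γ)^2 := by
      have hpow : (γ ^ (-(1:ℝ)/2 - ε/2))^2 = γ ^ (-(1:ℝ)-ε) := by
        rw [← Real.rpow_natCast (γ ^ (-(1:ℝ)/2 - ε/2)) 2, ← Real.rpow_mul hγ0.le]
        congr 1
        push_cast
        ring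
      have hsq : 2*t^2*(N:ℝ) = 8⁻¹*(log γ)^2 * (γ ^ (-(1:ℝ)-ε) * (N:ℝ)) := by
        rw [htdef]
        rw [show (4⁻¹ * log γ * γ ^ (-(1:ℝ)/2 - ε/2))^2
            = 16⁻¹ * (log γ)^2 * (γ ^ (-(1:ℝ)/2 - ε/2))^2 by ring, hpow]
        ring
      rw [hsq]
      have hmul : γ ^ (-(1:ℝ)-ε) * (N:ℝ) ≤ γ ^ (-(1:ℝ)-ε) * γ ^ ((1:ℝ)+ε) :=
        mul_le_mul_of_nonneg_left hN (Real.rpow_nonneg hγ0.le _)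
      have hone : γ ^ (-(1:ℝ)-ε) * γ ^ ((1:ℝ)+ε) = 1 := by
        rw [← Real.rpow_add hγ0, show (-(1:ℝ)-ε) + ((1:ℝ)+ε) = 0 by ring, Real.rpow_zero]
      calc 8⁻¹*(log γ)^2 * (γ ^ (-(1:ℝ)-ε) * (N:ℝ))
          ≤ 8⁻¹*(log γ)^2 * (γ ^ (-(1:ℝ)-ε) * γ ^ ((1:ℝ)+ε)) :=
            mul_le_mul_of_nonneg_left hmul (by positivity)
        _ = 8⁻¹ * (log γ)^2 := by rw [hone, mul_one]
    have hexp_le : -(t*c) + 2*t^2*(N:ℝ) ≤ -(1/8)*(log γ)^2 := by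
      rw [htc]
      nlinarith [h2t2]
    calc (P {ω |
          1 * Real.log γ * γ ^ (-(1:ℝ)/2 + ε/2) ≤
            (Finset.range (N + 1)).sup' Finset.nonempty_range_add_one
              (fun ℓ =>
                |(∑ i ∈ Finset.range ℓ, E i ω) / γ -
                  (∑ i ∈ Finset.range ℓ, F i ω) / γ|)}).toReal
        ≤ ((N:ℝ) + 1) * (2 * exp (-(t*c) + 2*t^2*(N:ℝ))) := step2.trans step3
      _ ≤ (γ ^ ((1:ℝ)+ε) + γ ^ ((1:ℝ)+ε)) * (2 * exp (-(1/8)*(log γ)^2)) := by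
          apply mul_le_mul
          · linarith
          · exact mul_le_mul_of_nonneg_left (exp_le_exp.mpr hexp_le) (by norm_num)
          · positivity
          · positivity
      _ = g γ := by
          rw [hgdef]
          ring
  have hO : (fun γ : ℝ =>
      (P {ω |
          1 * Real.log γ * γ ^ (-(1:ℝ)/2 + ε/2) ≤
            (Finset.range (⌊γ ^ ((1:ℝ) + ε)⌋₊ + 1)).sup' Finset.nonempty_range_add_one
              (fun ℓ =>
                |(∑ i ∈ Finset.range ℓ, E i ω) / γ -
                  (∑ i ∈ Finset.range ℓ, F i ω) / γ|)}).toReal) =O[atTop] g := by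
    rw [isBigO_iff]
    refine ⟨1, ?_⟩
    filter_upwards [hbound] with γ h
    rw [Real.norm_eq_abs, Real.norm_eq_abs, abs_of_nonneg ENNReal.toReal_nonneg]
    calc _ ≤ g γ := h
      _ ≤ 1 * |g γ| := by rw [one_mul]; exact le_abs_self _
  exact hO.trans_isLittleO (tail_littleO ((1:ℝ)+ε) q)


end
end
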